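/- For every c > 0 and every real x, one has |x·Φ(c·x) − max(0, x)| ≤ 1/(c·√(2π)), where Φ is the cumulative distribution function of the standard Gaussian measure. In particular, the rescaled GeLU functions x ↦ x·Φ(c·x) converge to ReLU uniformly on ℝ as c → ∞. -/

import Mathlib

open ProbabilityTheory Real

/-- The cumulative distribution function of the standard Gaussian measure on ℝ. -/
noncomputable def stdGaussianCDF (x : ℝ) : ℝ := cdf (gaussianReal 0 1) x

open MeasureTheory Set Filter

lemma phi_eq (s : ℝ) :
    gaussianPDFReal 0 1 s = (Real.sqrt (2 * π))⁻¹ * Real.exp (-(s ^ 2 / 2)) := by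
  simp [gaussianPDFReal]
  exact Or.inl (by ring)

lemma phi_nonneg (s : ℝ) : 0 ≤ gaussianPDFReal 0 1 s := gaussianPDFReal_nonneg 0 1 s

lemma phi_le (s : ℝ) : gaussianPDFReal 0 1 s ≤ (Real.sqrt (2 * π))⁻¹ := by
  rw [phi_eq]
  have h1 : Real.exp (-(s ^ 2 / 2)) ≤ 1 := by
    rw [Real.exp_le_one_iff]; nlinarith [sq_nonneg s]
  have h2 : (0:ℝ) ≤ (Real.sqrt (2 * π))⁻¹ := by positivity
  nlinarith

lemma integrable_mul_phi : Integrable (fun s : ℝ => s * gaussianPDFReal 0 1 s) := by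
  have h := (integrable_mul_exp_neg_mul_sq (by norm_num : (0:ℝ) < 1/2)).const_mul
    (Real.sqrt (2 * π))⁻¹
  refine h.congr ?_
  filter_upwards with s
  rw [phi_eq]
  ring_nf

lemma stdGaussianCDF_eq (t : ℝ) :
    stdGaussianCDF t = ∫ s in Iic t, gaussianPDFReal 0 1 s := by
  rw [stdGaussianCDF, cdf_eq_real, measureReal_def, gaussianReal_apply_eq_integral 0 one_ne_zero,
    ENNReal.toReal_ofReal]
  exact setIntegral_nonneg measurableSet_Iic fun s _ => phi_nonneg s

lemma one_sub_stdGaussianCDF (t : ℝ) :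
    1 - stdGaussianCDF t = ∫ s in Ioi t, gaussianPDFReal 0 1 s := by
  have h := integral_add_compl (measurableSet_Iic (a := t)) (integrable_gaussianPDFReal 0 1)
  rw [compl_Iic] at h
  have h1 := integral_gaussianPDFReal_eq_one 0 (one_ne_zero)
  rw [stdGaussianCDF_eq]
  linarith

lemma hasDerivAt_exp_neg_sq (s : ℝ) :
    HasDerivAt (fun s : ℝ => Real.exp (-(s ^ 2 / 2))) (Real.exp (-(s ^ 2 / 2)) * (-s)) s := by
  have h : HasDerivAt (fun s : ℝ => -(s ^ 2 / 2)) (-s) s := by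
    refine (((hasDerivAt_pow 2 s).div_const 2).neg).congr_deriv ?_
    norm_num
  exact h.exp

lemma tendsto_sq_atTop : Tendsto (fun s : ℝ => s ^ 2 / 2) atTop atTop :=
  (tendsto_pow_atTop two_ne_zero).atTop_div_const (by norm_num)

lemma tendsto_exp_zero_atTop :
    Tendsto (fun s : ℝ => Real.exp (-(s ^ 2 / 2))) atTop (nhds 0) :=
  Real.tendsto_exp_atBot.comp (tendsto_neg_atBot_iff.mpr tendsto_sq_atTop)

lemma tendsto_exp_zero_atBot :
    Tendsto (fun s : ℝ => Real.exp (-(s ^ 2 / 2))) atBot (nhds 0) := by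
  have h : Tendsto (fun s : ℝ => s ^ 2 / 2) atBot atTop := by
    have := tendsto_sq_atTop.comp tendsto_neg_atBot_atTop
    simpa [Function.comp_def, neg_sq] using this
  exact Real.tendsto_exp_atBot.comp (tendsto_neg_atBot_iff.mpr h)

lemma key_Ioi (a : ℝ) :
    ∫ s in Ioi a, s * gaussianPDFReal 0 1 s = gaussianPDFReal 0 1 a := by
  have hderiv : ∀ s ∈ Ici a,
      HasDerivAt (fun s : ℝ => -((Real.sqrt (2 * π))⁻¹ * Real.exp (-(s ^ 2 / 2))))
        (s * gaussianPDFReal 0 1 s) s := by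
    intro s _
    have h := ((hasDerivAt_exp_neg_sq s).const_mul (Real.sqrt (2 * π))⁻¹).neg
    refine h.congr_deriv ?_
    rw [phi_eq]; ring
  have hint : IntegrableOn (fun s : ℝ => s * gaussianPDFReal 0 1 s) (Ioi a) :=
    integrable_mul_phi.integrableOn
  have htend : Tendsto (fun s : ℝ => -((Real.sqrt (2 * π))⁻¹ * Real.exp (-(s ^ 2 / 2))))
      atTop (nhds 0) := by
    have := (tendsto_exp_zero_atTop.const_mul (Real.sqrt (2 * π))⁻¹).neg
    simpa using this
  have := integral_Ioi_of_hasDerivAt_of_tendsto' hderiv hint htend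
  rw [this, phi_eq]; ring

lemma key_Iic (a : ℝ) :
    ∫ s in Iic a, (-s) * gaussianPDFReal 0 1 s = gaussianPDFReal 0 1 a := by
  have hderiv : ∀ s ∈ Iic a,
      HasDerivAt (fun s : ℝ => (Real.sqrt (2 * π))⁻¹ * Real.exp (-(s ^ 2 / 2)))
        ((-s) * gaussianPDFReal 0 1 s) s := by
    intro s _
    have h := (hasDerivAt_exp_neg_sq s).const_mul (Real.sqrt (2 * π))⁻¹
    refine h.congr_deriv ?_
    rw [phi_eq]; ring
  have hint : IntegrableOn (fun s : ℝ => (-s) * gaussianPDFReal 0 1 s) (Iic a) := by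
    have : Integrable (fun s : ℝ => (-s) * gaussianPDFReal 0 1 s) := by
      have := integrable_mul_phi.neg
      refine this.congr ?_
      filter_upwards with s; simp
    exact this.integrableOn
  have htend : Tendsto (fun s : ℝ => (Real.sqrt (2 * π))⁻¹ * Real.exp (-(s ^ 2 / 2)))
      atBot (nhds 0) := by
    have := tendsto_exp_zero_atBot.const_mul (Real.sqrt (2 * π))⁻¹
    simpa using this
  have := integral_Iic_of_hasDerivAt_of_tendsto' hderiv hint htend
  rw [this, phi_eq]; ring

theorem scaled_gelu_approx_relu (c : ℝ) (hc : 0 < c) (x : ℝ) :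
    |x * stdGaussianCDF (c * x) - max 0 x| ≤ 1 / (c * Real.sqrt (2 * π)) := by
  have hbound : gaussianPDFReal 0 1 (c * x) / c ≤ 1 / (c * Real.sqrt (2 * π)) := by
    rw [div_le_div_iff₀ hc (by positivity)]
    have := phi_le (c * x)
    have hs : 0 < Real.sqrt (2 * π) := by positivity
    calc gaussianPDFReal 0 1 (c * x) * (c * Real.sqrt (2 * π))
        ≤ (Real.sqrt (2 * π))⁻¹ * (c * Real.sqrt (2 * π)) := by
          apply mul_le_mul_of_nonneg_right this (by positivity)
      _ = 1 * c := by field_simp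
  rcases le_or_gt 0 x with hx | hx
  · -- x ≥ 0
    rw [max_eq_right hx]
    have hcdf1 : stdGaussianCDF (c * x) ≤ 1 := cdf_le_one (gaussianReal 0 1) (c * x)
    have habs : |x * stdGaussianCDF (c * x) - x| = x * (1 - stdGaussianCDF (c * x)) := by
      rw [abs_of_nonpos (by nlinarith)]
      ring
    rw [habs, one_sub_stdGaussianCDF, ← integral_const_mul]
    calc ∫ s in Ioi (c * x), x * gaussianPDFReal 0 1 s
        ≤ ∫ s in Ioi (c * x), (s / c) * gaussianPDFReal 0 1 s := by
          apply setIntegral_mono_on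
          · exact ((integrable_gaussianPDFReal 0 1).const_mul x).integrableOn
          · have : Integrable (fun s : ℝ => (s / c) * gaussianPDFReal 0 1 s) := by
              refine (integrable_mul_phi.div_const c).congr ?_
              filter_upwards with s; ring
            exact this.integrableOn
          · exact measurableSet_Ioi
          · intro s hs
            have h1 : x ≤ s / c := by
              rw [le_div_iff₀ hc]; rw [mem_Ioi] at hs; linarith
            exact mul_le_mul_of_nonneg_right h1 (phi_nonneg s)
      _ = (∫ s in Ioi (c * x), s * gaussianPDFReal 0 1 s) / c := by
          rw [← integral_div]
          congr 1; ext s; ring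
      _ = gaussianPDFReal 0 1 (c * x) / c := by rw [key_Ioi]
      _ ≤ 1 / (c * Real.sqrt (2 * π)) := hbound
  · -- x < 0
    rw [max_eq_left hx.le, sub_zero]
    have hcdf0 : (0:ℝ) ≤ stdGaussianCDF (c * x) := cdf_nonneg (gaussianReal 0 1) (c * x)
    have habs : |x * stdGaussianCDF (c * x)| = (-x) * stdGaussianCDF (c * x) := by
      rw [abs_of_nonpos (by nlinarith)]; ring
    rw [habs, stdGaussianCDF_eq, ← integral_const_mul]
    calc ∫ s in Iic (c * x), (-x) * gaussianPDFReal 0 1 s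
        ≤ ∫ s in Iic (c * x), (-s / c) * gaussianPDFReal 0 1 s := by
          apply setIntegral_mono_on
          · exact ((integrable_gaussianPDFReal 0 1).const_mul (-x)).integrableOn
          · have : Integrable (fun s : ℝ => (-s / c) * gaussianPDFReal 0 1 s) := by
              refine ((integrable_mul_phi.div_const c).neg).congr ?_
              filter_upwards with s; simp only [Pi.neg_apply]; ring
            exact this.integrableOn
          · exact measurableSet_Iic
          · intro s hs
            have h1 : -x ≤ -s / c := by
              rw [le_div_iff₀ hc]; rw [mem_Iic] at hs; nlinarith
            exact mul_le_mul_of_nonneg_right h1 (phi_nonneg s)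
      _ = (∫ s in Iic (c * x), (-s) * gaussianPDFReal 0 1 s) / c := by
          rw [← integral_div]
          congr 1; ext s; ring
      _ = gaussianPDFReal 0 1 (c * x) / c := by rw [key_Iic]
      _ ≤ 1 / (c * Real.sqrt (2 * π)) := hbound
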